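/- Let G be a topological group and S a closed subgroup of finite index in G. Then G is strongly amenable if and only if S is strongly amenable. -/

import Mathlib

universe u v

def IsMinimalFlow (G X : Type*) [Group G] [TopologicalSpace X] [MulAction G X] : Prop :=
  ∀ x : X, Dense (Set.range fun g : G => g • x)

def IsProximalFlow (G X : Type*) [Group G] [TopologicalSpace X] [MulAction G X] : Prop :=
  ∀ x y : X, ∃ z : X, (z, z) ∈ closure (Set.range fun g : G => (g • x, g • y))

/-- A topological group is strongly amenable if every minimal proximal flow of it is trivial. -/
def IsStronglyAmenable (G : Type u) [Group G] [TopologicalSpace G] : Prop :=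
  ∀ (X : Type v) [TopologicalSpace X] [CompactSpace X] [T2Space X]
    [MulAction G X] [ContinuousSMul G X],
    IsMinimalFlow G X → IsProximalFlow G X → Subsingleton X

namespace SAAux

open Set

/-! ### Generic flow lemmas -/

section Flow

variable {H : Type*} [Group H] {X : Type*} [TopologicalSpace X] [MulAction H X]

/-- The orbit of a point under a set of group elements. -/
def orb (C : Set H) (x : X) : Set X := (fun g => g • x) '' C

/-- Invariance of a set under a set of group elements. -/
def inve (C : Set H) (B : Set X) : Prop := ∀ g ∈ C, ∀ x ∈ B, g • x ∈ B

lemma orb_subset {C : Set H} {B : Set X} (hB : inve C B) {x : X} (hx : x ∈ B) :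
    orb C x ⊆ B := by
  rintro _ ⟨g, hg, rfl⟩; exact hB g hg x hx

lemma mem_orb {C : Set H} (h1 : (1 : H) ∈ C) (x : X) : x ∈ orb C x :=
  ⟨1, h1, one_smul _ _⟩

lemma closure_orb_min {C : Set H} {B : Set X} (hB : inve C B) (hBc : IsClosed B) {x : X}
    (hx : x ∈ B) : closure (orb C x) ⊆ B :=
  closure_minimal (orb_subset hB hx) hBc

lemma inve_closure_orb [ContinuousConstSMul H X] {C : Set H}
    (hC : ∀ g ∈ C, ∀ h ∈ C, g * h ∈ C) (x : X) :
    inve C (closure (orb C x)) := by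
  intro g hg y hy
  have h1 : (fun z : X => g • z) '' closure (orb C x)
      ⊆ closure ((fun z : X => g • z) '' orb C x) :=
    image_closure_subset_closure_image (continuous_const_smul g)
  have h2 : (fun z : X => g • z) '' orb C x ⊆ orb C x := by
    rintro _ ⟨_, ⟨h, hh, rfl⟩, rfl⟩
    exact ⟨g * h, hC g hg h hh, by simp [mul_smul]⟩
  exact closure_mono h2 (h1 ⟨y, hy, rfl⟩)

/-- Zorn: existence of a minimal nonempty closed invariant subset. -/
lemma exists_minimal_invariant [CompactSpace X] [Nonempty X] (C : Set H) :
    ∃ M : Set X, M.Nonempty ∧ IsClosed M ∧ inve C M ∧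
      ∀ B ⊆ M, B.Nonempty → IsClosed B → inve C B → B = M := by
  have hzorn : ∀ c ⊆ {B : Set X | B.Nonempty ∧ IsClosed B ∧ inve C B},
      IsChain (· ⊆ ·) c → c.Nonempty →
      ∃ lb ∈ {B : Set X | B.Nonempty ∧ IsClosed B ∧ inve C B}, ∀ s ∈ c, lb ⊆ s := by
    intro c hcS hchain hcne
    haveI : Nonempty c := hcne.to_subtype
    have hne : (⋂ B : c, (B : Set X)).Nonempty := by
      apply IsCompact.nonempty_iInter_of_directed_nonempty_isCompact_isClosed
      · intro i j
        rcases eq_or_ne i j with rfl | hij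
        · exact ⟨i, Subset.rfl, Subset.rfl⟩
        · rcases hchain i.2 j.2 (fun h => hij (Subtype.ext h)) with h | h
          · exact ⟨i, Subset.rfl, h⟩
          · exact ⟨j, h, Subset.rfl⟩
      · exact fun i => (hcS i.2).1
      · exact fun i => ((hcS i.2).2.1).isCompact
      · exact fun i => (hcS i.2).2.1
    refine ⟨⋂ B : c, (B : Set X), ⟨hne, isClosed_iInter fun i => (hcS i.2).2.1, ?_⟩,
      fun s hs => iInter_subset_of_subset ⟨s, hs⟩ Subset.rfl⟩
    intro g hg x hx
    exact mem_iInter.mpr fun i => (hcS i.2).2.2 g hg x (mem_iInter.mp hx i)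
  obtain ⟨M, -, hM⟩ := zorn_superset_nonempty
      {B : Set X | B.Nonempty ∧ IsClosed B ∧ inve C B} hzorn univ
      ⟨univ_nonempty, isClosed_univ, fun _ _ _ _ => mem_univ _⟩
  exact ⟨M, hM.prop.1, hM.prop.2.1, hM.prop.2.2,
    fun B hBM hBne hBc hBi => subset_antisymm hBM (hM.2 ⟨hBne, hBc, hBi⟩ hBM)⟩

variable [CompactSpace X] [T2Space X] [ContinuousConstSMul H X]

lemma range_smul_subset_iUnion (N : Subgroup H) (x : X) :
    (Set.range fun g : H => g • x)
      ⊆ ⋃ q : H ⧸ N, (fun y => Quotient.out q • y) '' closure (orb (N : Set H) x) := by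
  rintro _ ⟨g, rfl⟩
  have hn : (Quotient.out ((g : H ⧸ N)))⁻¹ * g ∈ N :=
    QuotientGroup.eq.mp (QuotientGroup.out_eq' (g : H ⧸ N))
  refine mem_iUnion.mpr ⟨(g : H ⧸ N),
    ⟨((Quotient.out ((g : H ⧸ N)))⁻¹ * g) • x, subset_closure ⟨_, hn, rfl⟩, ?_⟩⟩
  show Quotient.out ((g : H ⧸ N)) • ((Quotient.out ((g : H ⧸ N)))⁻¹ * g) • x = g • x
  rw [← mul_smul, mul_inv_cancel_left]

lemma isClosed_iUnion_smul (N : Subgroup H) [N.FiniteIndex] {A : Set X} (hA : IsClosed A) :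
    IsClosed (⋃ q : H ⧸ N, (fun y => Quotient.out q • y) '' A) :=
  isClosed_iUnion_of_finite fun q =>
    ((hA.isCompact).image (continuous_const_smul _)).isClosed

lemma prox_restrict (N : Subgroup H) [N.FiniteIndex]
    (hprox : IsProximalFlow H X) (x y : X) :
    ∃ z : X, (z, z) ∈ closure (orb (N : Set H) ((x, y) : X × X)) := by
  obtain ⟨z, hz⟩ := hprox x y
  have hrange : (Set.range fun g : H => ((g • x, g • y) : X × X))
      = Set.range fun g : H => g • ((x, y) : X × X) := by
    simp only [Prod.smul_mk]
  rw [hrange] at hz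
  have hsub : closure (Set.range fun g : H => g • ((x, y) : X × X))
      ⊆ ⋃ q : H ⧸ N, (fun p : X × X => Quotient.out q • p) ''
          closure (orb (N : Set H) ((x, y) : X × X)) :=
    closure_minimal (range_smul_subset_iUnion N ((x, y) : X × X))
      (isClosed_iUnion_smul N isClosed_closure)
  have hmem := hsub hz
  rw [mem_iUnion] at hmem
  obtain ⟨q, p, hp, hqp⟩ := hmem
  refine ⟨(Quotient.out q)⁻¹ • z, ?_⟩
  have hpz : p = (Quotient.out q)⁻¹ • ((z, z) : X × X) := by
    rw [← hqp, ← mul_smul, inv_mul_cancel, one_smul]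
  have : ((Quotient.out q)⁻¹ • ((z, z) : X × X))
      = (((Quotient.out q)⁻¹ • z, (Quotient.out q)⁻¹ • z) : X × X) := rfl
  rw [← this, ← hpz]
  exact hp

end Flow

/-! ### The restriction lemma -/

theorem restrict_minimal_proximal {H : Type*} [Group H]
    {X : Type*} [TopologicalSpace X] [CompactSpace X] [T2Space X]
    [MulAction H X] [ContinuousConstSMul H X]
    (K : Subgroup H) [K.FiniteIndex]
    (hmin : IsMinimalFlow H X) (hprox : IsProximalFlow H X) :
    IsMinimalFlow K X ∧ IsProximalFlow K X := by
  classical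
  set N : Subgroup H := K.normalCore with hNdef
  haveI : N.FiniteIndex := Subgroup.finiteIndex_normalCore K
  haveI hNn : N.Normal := Subgroup.normalCore_normal K
  have hNK : N ≤ K := Subgroup.normalCore_le K
  have nprox : ∀ x y : X, ∃ z : X, (z, z) ∈ closure (orb (N : Set H) ((x, y) : X × X)) :=
    fun x y => prox_restrict N hprox x y
  have hproxK : IsProximalFlow K X := by
    intro x y
    obtain ⟨z, hz⟩ := nprox x y
    refine ⟨z, closure_mono ?_ hz⟩
    rintro _ ⟨g, hg, rfl⟩
    exact ⟨⟨g, hNK hg⟩, by simp [Prod.smul_mk]⟩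
  rcases isEmpty_or_nonempty X with hX | hX
  · exact ⟨fun x => (IsEmpty.false x).elim, hproxK⟩
  obtain ⟨Y, hYne, hYc, hYinv, hYmin⟩ := exists_minimal_invariant (X := X) (N : Set H)
  -- any two N-minimal sets coincide
  have huniq : ∀ B1 B2 : Set X,
      (B1.Nonempty ∧ IsClosed B1 ∧ inve (N : Set H) B1 ∧
        ∀ B ⊆ B1, B.Nonempty → IsClosed B → inve (N : Set H) B → B = B1) →
      (B2.Nonempty ∧ IsClosed B2 ∧ inve (N : Set H) B2 ∧
        ∀ B ⊆ B2, B.Nonempty → IsClosed B → inve (N : Set H) B → B = B2) →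
      B1 = B2 := by
    rintro B1 B2 ⟨⟨y1, hy1⟩, h1c, h1i, h1m⟩ ⟨⟨y2, hy2⟩, h2c, h2i, h2m⟩
    obtain ⟨z, hz⟩ := nprox y1 y2
    have hsub : closure (orb (N : Set H) ((y1, y2) : X × X)) ⊆ B1 ×ˢ B2 := by
      apply closure_minimal ?_ (h1c.prod h2c)
      rintro _ ⟨g, hg, rfl⟩
      exact ⟨h1i g hg y1 hy1, h2i g hg y2 hy2⟩
    have hz12 : z ∈ B1 ∩ B2 := ⟨(hsub hz).1, (hsub hz).2⟩
    have e1 : B1 ∩ B2 = B1 := h1m _ inter_subset_left ⟨z, hz12⟩ (h1c.inter h2c)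
      (fun g hg x hx => ⟨h1i g hg x hx.1, h2i g hg x hx.2⟩)
    have e2 : B1 ∩ B2 = B2 := h2m _ inter_subset_right ⟨z, hz12⟩ (h1c.inter h2c)
      (fun g hg x hx => ⟨h1i g hg x hx.1, h2i g hg x hx.2⟩)
    rw [← e1, e2]
  -- translates of Y are N-minimal
  have htrans : ∀ g : H,
      ((fun y => g • y) '' Y).Nonempty ∧ IsClosed ((fun y => g • y) '' Y) ∧
        inve (N : Set H) ((fun y => g • y) '' Y) ∧
        ∀ B ⊆ (fun y => g • y) '' Y, B.Nonempty → IsClosed B → inve (N : Set H) B →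
          B = (fun y => g • y) '' Y := by
    intro g
    refine ⟨hYne.image _, (hYc.isCompact.image (continuous_const_smul g)).isClosed, ?_, ?_⟩
    · rintro n hn _ ⟨y, hy, rfl⟩
      have hmem : g⁻¹ * n * g ∈ N := by
        have := hNn.conj_mem n hn g⁻¹
        rwa [inv_inv] at this
      refine ⟨(g⁻¹ * n * g) • y, hYinv _ hmem y hy, ?_⟩
      show g • (g⁻¹ * n * g) • y = n • g • y
      rw [← mul_smul, ← mul_smul]
      congr 1
      group
    · intro B hB hBne hBc hBi
      have h1 : (fun y => g⁻¹ • y) '' B ⊆ Y := by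
        rintro _ ⟨b, hb, rfl⟩
        obtain ⟨y, hy, rfl⟩ := hB hb
        show g⁻¹ • g • y ∈ Y
        rwa [← mul_smul, inv_mul_cancel, one_smul]
      have hinvB : inve (N : Set H) ((fun y => g⁻¹ • y) '' B) := by
        rintro n hn _ ⟨b, hb, rfl⟩
        refine ⟨(g * n * g⁻¹) • b, hBi _ (hNn.conj_mem n hn g) b hb, ?_⟩
        show g⁻¹ • (g * n * g⁻¹) • b = n • g⁻¹ • b
        rw [← mul_smul, ← mul_smul]
        congr 1
        group
      have h2 := hYmin _ h1 (hBne.image _)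
        ((hBc.isCompact.image (continuous_const_smul g⁻¹)).isClosed) hinvB
      have h3 : B = (fun y => g • y) '' ((fun y => g⁻¹ • y) '' B) := by
        rw [image_image]
        have : ∀ b : X, g • g⁻¹ • b = b := fun b => by
          rw [← mul_smul, mul_inv_cancel, one_smul]
        simp only [this, image_id']
      rw [h3, h2]
  -- the union of the translates is everything
  have hU : (⋃ q : H ⧸ N, (fun y => Quotient.out q • y) '' Y) = univ := by
    obtain ⟨y0, hy0⟩ := hYne
    have hy0U : Quotient.out (((1 : H) : H ⧸ N)) • y0
        ∈ ⋃ q : H ⧸ N, (fun y => Quotient.out q • y) '' Y :=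
      mem_iUnion.mpr ⟨_, ⟨y0, hy0, rfl⟩⟩
    have hUc : IsClosed (⋃ q : H ⧸ N, (fun y => Quotient.out q • y) '' Y) :=
      isClosed_iUnion_smul N hYc
    have hUinv : ∀ g : H, ∀ u ∈ ⋃ q : H ⧸ N, (fun y => Quotient.out q • y) '' Y,
        g • u ∈ ⋃ q : H ⧸ N, (fun y => Quotient.out q • y) '' Y := by
      intro g u hu
      obtain ⟨q, ⟨y, hy, rfl⟩⟩ := mem_iUnion.mp hu
      have hn : (Quotient.out (((g * Quotient.out q : H) : H ⧸ N)))⁻¹ * (g * Quotient.out q) ∈ N :=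
        QuotientGroup.eq.mp (QuotientGroup.out_eq' _)
      refine mem_iUnion.mpr ⟨((g * Quotient.out q : H) : H ⧸ N),
        ⟨((Quotient.out (((g * Quotient.out q : H) : H ⧸ N)))⁻¹ * (g * Quotient.out q)) • y,
          hYinv _ hn y hy, ?_⟩⟩
      show Quotient.out (((g * Quotient.out q : H) : H ⧸ N)) •
          ((Quotient.out (((g * Quotient.out q : H) : H ⧸ N)))⁻¹ * (g * Quotient.out q)) • y
          = g • Quotient.out q • y
      rw [← mul_smul, ← mul_smul]
      congr 1
      group
    have hdense := hmin (Quotient.out (((1 : H) : H ⧸ N)) • y0)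
    have hsub : (Set.range fun g : H => g • (Quotient.out (((1 : H) : H ⧸ N)) • y0))
        ⊆ ⋃ q : H ⧸ N, (fun y => Quotient.out q • y) '' Y := by
      rintro _ ⟨g, rfl⟩
      exact hUinv g _ hy0U
    apply eq_univ_of_univ_subset
    calc univ = closure (Set.range fun g : H => g • (Quotient.out (((1 : H) : H ⧸ N)) • y0)) :=
          hdense.closure_eq.symm
      _ ⊆ closure (⋃ q : H ⧸ N, (fun y => Quotient.out q • y) '' Y) := closure_mono hsub
      _ = ⋃ q : H ⧸ N, (fun y => Quotient.out q • y) '' Y := hUc.closure_eq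
  have hYuniv : Y = univ := by
    have hYq : ∀ q : H ⧸ N, (fun y => Quotient.out q • y) '' Y = Y :=
      fun q => huniq _ _ (htrans _) ⟨hYne, hYc, hYinv, hYmin⟩
    rw [← hU]
    simp only [hYq, iUnion_const]
  have hminK : IsMinimalFlow K X := by
    intro x
    have h1 : closure (orb (N : Set H) x) = Y :=
      hYmin _ (by rw [hYuniv]; exact subset_univ _)
        ⟨x, subset_closure (mem_orb N.one_mem x)⟩ isClosed_closure
        (inve_closure_orb (fun g hg h hh => N.mul_mem hg hh) x)
    have h2 : closure (orb (N : Set H) x) = univ := h1.trans hYuniv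
    have hmono : orb (N : Set H) x ⊆ Set.range fun g : ↥K => g • x := by
      rintro _ ⟨g, hg, rfl⟩
      exact ⟨⟨g, hNK hg⟩, rfl⟩
    rw [dense_iff_closure_eq]
    apply eq_univ_of_univ_subset
    rw [← h2]
    exact closure_mono hmono
  exact ⟨hminK, hproxK⟩

end SAAux

section Induced

open Set SAAux

variable {G : Type u} [Group G] {N : Subgroup G} {k : ℕ}

/-- A representative of the coset indexed by `i`. -/
noncomputable def rep (e : G ⧸ N ≃ Fin k) (i : Fin k) : G := Quotient.out (e.symm i)

lemma rep_mk (e : G ⧸ N ≃ Fin k) (i : Fin k) : ((rep e i : G) : G ⧸ N) = e.symm i :=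
  QuotientGroup.out_eq' _

/-- The index of the coset of `g⁻¹ * rep e i`. -/
noncomputable def jdx (e : G ⧸ N ≃ Fin k) (g : G) (i : Fin k) : Fin k := e (((g⁻¹ * rep e i : G) : G ⧸ N))

lemma jdx_spec (e : G ⧸ N ≃ Fin k) (g : G) (i : Fin k) :
    (rep e (jdx e g i))⁻¹ * (g⁻¹ * rep e i) ∈ N := by
  apply QuotientGroup.eq.mp
  rw [rep_mk]
  simp [jdx]

lemma sel_mem (e : G ⧸ N ≃ Fin k) (g : G) (i : Fin k) :
    (rep e i)⁻¹ * g * rep e (jdx e g i) ∈ N := by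
  have h2 := N.inv_mem (jdx_spec e g i)
  rwa [show ((rep e (jdx e g i))⁻¹ * (g⁻¹ * rep e i))⁻¹
      = (rep e i)⁻¹ * g * rep e (jdx e g i) by group] at h2

/-- The cocycle of the induced action. -/
noncomputable def sel (e : G ⧸ N ≃ Fin k) (g : G) (i : Fin k) : ↥N :=
  ⟨(rep e i)⁻¹ * g * rep e (jdx e g i), sel_mem e g i⟩

lemma sel_coe (e : G ⧸ N ≃ Fin k) (g : G) (i : Fin k) :
    (sel e g i : G) = (rep e i)⁻¹ * g * rep e (jdx e g i) := rfl

lemma jdx_one (e : G ⧸ N ≃ Fin k) (i : Fin k) : jdx e 1 i = i := by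
  simp [jdx, rep_mk]

lemma sel_one (e : G ⧸ N ≃ Fin k) (i : Fin k) : sel e 1 i = 1 := by
  apply Subtype.ext
  rw [sel_coe, jdx_one]
  simp

lemma jdx_mul (e : G ⧸ N ≃ Fin k) (g h : G) (i : Fin k) :
    jdx e (g * h) i = jdx e h (jdx e g i) := by
  show e (((g * h)⁻¹ * rep e i : G) : G ⧸ N) = e ((h⁻¹ * rep e (jdx e g i) : G) : G ⧸ N)
  congr 1
  rw [QuotientGroup.eq]
  have h2 := sel_mem e g i
  rwa [show (rep e i)⁻¹ * g * rep e (jdx e g i)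
      = ((g * h)⁻¹ * rep e i)⁻¹ * (h⁻¹ * rep e (jdx e g i)) by group] at h2

lemma sel_mul (e : G ⧸ N ≃ Fin k) (g h : G) (i : Fin k) :
    sel e (g * h) i = sel e g i * sel e h (jdx e g i) := by
  apply Subtype.ext
  rw [Subgroup.coe_mul, sel_coe, sel_coe, sel_coe, jdx_mul]
  group

lemma jdx_mem (e : G ⧸ N ≃ Fin k) [N.Normal] {n : G} (hn : n ∈ N) (i : Fin k) :
    jdx e n i = i := by
  unfold jdx
  have hq : ((n⁻¹ * rep e i : G) : G ⧸ N) = ((rep e i : G) : G ⧸ N) := by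
    rw [QuotientGroup.eq]
    have := (‹N.Normal›).conj_mem n hn (rep e i)⁻¹
    rwa [inv_inv, show (rep e i)⁻¹ * n * rep e i = (n⁻¹ * rep e i)⁻¹ * rep e i by group] at this
  rw [hq, rep_mk, Equiv.apply_symm_apply]

/-- The induced (co-induced) flow: functions on coset representatives. -/
def Ind (e : G ⧸ N ≃ Fin k) (Y : Type v) : Type v := Fin k → Y

variable (e : G ⧸ N ≃ Fin k) (Y : Type v)

instance [TopologicalSpace Y] : TopologicalSpace (Ind e Y) :=
  inferInstanceAs (TopologicalSpace (Fin k → Y))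

instance [TopologicalSpace Y] [CompactSpace Y] : CompactSpace (Ind e Y) :=
  inferInstanceAs (CompactSpace (Fin k → Y))

instance [TopologicalSpace Y] [T2Space Y] : T2Space (Ind e Y) :=
  inferInstanceAs (T2Space (Fin k → Y))

instance [Nonempty Y] : Nonempty (Ind e Y) :=
  inferInstanceAs (Nonempty (Fin k → Y))

noncomputable instance Ind.mulAction [MulAction ↥N Y] : MulAction G (Ind e Y) where
  smul g f := fun i => sel e g i • (f (jdx e g i) : Y)
  one_smul f := funext fun i => by
    show sel e 1 i • (f (jdx e 1 i) : Y) = f i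
    rw [jdx_one, sel_one, one_smul]
  mul_smul g h f := funext fun i => by
    show sel e (g * h) i • (f (jdx e (g * h) i) : Y)
      = sel e g i • ((fun i' => sel e h i' • (f (jdx e h i') : Y)) (jdx e g i))
    rw [jdx_mul, sel_mul, mul_smul]

lemma ind_smul_apply [MulAction ↥N Y] (g : G) (f : Ind e Y) (i : Fin k) :
    (g • f) i = sel e g i • f (jdx e g i) := rfl

instance [TopologicalSpace Y] [MulAction ↥N Y] [ContinuousConstSMul ↥N Y] :
    ContinuousConstSMul G (Ind e Y) := by
  constructor
  intro g
  show Continuous fun f : Ind e Y => (fun i => sel e g i • (f (jdx e g i) : Y) : Fin k → Y)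
  exact continuous_pi fun i => (continuous_apply (jdx e g i)).const_smul (sel e g i)

theorem ind_continuousSMul [TopologicalSpace G] [IsTopologicalGroup G]
    [TopologicalSpace Y] [MulAction ↥N Y] [ContinuousSMul ↥N Y]
    (hN : IsOpen (N : Set G)) : ContinuousSMul G (Ind e Y) := by
  constructor
  show Continuous fun p : G × Ind e Y =>
    (fun i => sel e p.1 i • (p.2 (jdx e p.1 i) : Y) : Fin k → Y)
  apply continuous_pi
  intro i
  rw [continuous_iff_continuousAt]
  rintro ⟨g₀, f₀⟩
  set j₀ := jdx e g₀ i with hj₀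
  set ψ : G → G := fun g => (rep e i)⁻¹ * g * rep e j₀ with hψ
  have hψc : Continuous ψ := by
    apply Continuous.mul
    · exact continuous_const.mul continuous_id
    · exact continuous_const
  have hViff : ∀ g : G, ψ g ∈ N ↔ jdx e g i = j₀ := by
    intro g
    constructor
    · intro h
      have hq : ((g⁻¹ * rep e i : G) : G ⧸ N) = ((rep e j₀ : G) : G ⧸ N) := by
        rw [QuotientGroup.eq]
        rwa [show (g⁻¹ * rep e i)⁻¹ * rep e j₀ = ψ g by rw [hψ]; group]
      show e (((g⁻¹ * rep e i : G) : G ⧸ N)) = j₀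
      rw [hq, rep_mk, Equiv.apply_symm_apply]
    · intro h
      have := sel_mem e g i
      rwa [h] at this
  set V : Set G := ψ ⁻¹' (N : Set G) with hV
  have hVo : IsOpen V := hN.preimage hψc
  have hg₀ : g₀ ∈ V := by
    show ψ g₀ ∈ (N : Set G)
    exact (hViff g₀).mpr rfl
  have hcont : ContinuousOn (fun p : G × Ind e Y => sel e p.1 i • (p.2 (jdx e p.1 i) : Y))
      (V ×ˢ (univ : Set (Ind e Y))) := by
    rw [continuousOn_iff_continuous_restrict]
    have h1 : Continuous fun q : ↥(V ×ˢ (univ : Set (Ind e Y))) =>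
        (⟨ψ q.1.1, q.2.1⟩ : ↥N) :=
      Continuous.subtype_mk (hψc.comp (continuous_fst.comp continuous_subtype_val)) _
    have h2 : Continuous fun q : ↥(V ×ˢ (univ : Set (Ind e Y))) => (q.1.2 j₀ : Y) :=
      (continuous_apply j₀).comp (continuous_snd.comp continuous_subtype_val)
    have h3 := h1.smul h2
    apply h3.congr
    intro q
    have hjd : jdx e q.1.1 i = j₀ := (hViff q.1.1).mp q.2.1
    have hsel : sel e q.1.1 i = ⟨ψ q.1.1, q.2.1⟩ := Subtype.ext (by rw [sel_coe, hjd])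
    show (⟨ψ q.1.1, q.2.1⟩ : ↥N) • q.1.2 j₀ = sel e q.1.1 i • (q.1.2 (jdx e q.1.1 i) : Y)
    rw [hjd, hsel]
  exact hcont.continuousAt (IsOpen.mem_nhds (hVo.prod isOpen_univ) ⟨hg₀, mem_univ _⟩)

theorem ind_proximal [TopologicalSpace Y] [CompactSpace Y] [T2Space Y]
    [MulAction ↥N Y] [ContinuousConstSMul ↥N Y] [N.Normal]
    (hYprox : IsProximalFlow ↥N Y) : IsProximalFlow G (Ind e Y) := by
  classical
  intro f1 f2
  have key : ∀ m : ℕ, ∀ a b : Ind e Y, ∃ c : Ind e Y × Ind e Y,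
      c ∈ closure (orb (N : Set G) ((a, b) : Ind e Y × Ind e Y)) ∧
        ∀ i : Fin k, (i : ℕ) < m → c.1 i = c.2 i := by
    intro m
    induction m with
    | zero =>
      exact fun a b => ⟨(a, b), subset_closure (mem_orb N.one_mem _),
        fun i hi => absurd hi (by omega)⟩
    | succ m ih =>
      intro a b
      obtain ⟨c, hc, hcoord⟩ := ih a b
      by_cases hmk : m < k
      · set im : Fin k := ⟨m, hmk⟩ with him
        have himg : (Set.range fun n : ↥N => ((n • c.1 im, n • c.2 im) : Y × Y)) =
            (fun p : Ind e Y × Ind e Y => ((p.1 im, p.2 im) : Y × Y)) ''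
              orb (N : Set G) ((c.1, c.2) : Ind e Y × Ind e Y) := by
          ext p
          constructor
          · rintro ⟨⟨n, hn⟩, rfl⟩
            have hn' : rep e im * n * (rep e im)⁻¹ ∈ N := (‹N.Normal›).conj_mem n hn _
            have hj : jdx e (rep e im * n * (rep e im)⁻¹) im = im := jdx_mem e hn' im
            have hsel : sel e (rep e im * n * (rep e im)⁻¹) im = ⟨n, hn⟩ :=
              Subtype.ext (by rw [sel_coe, hj]; group)
            refine ⟨(rep e im * n * (rep e im)⁻¹) • ((c.1, c.2) : Ind e Y × Ind e Y),
              ⟨_, hn', rfl⟩, ?_⟩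
            show ((((rep e im * n * (rep e im)⁻¹) • c.1) im : Y),
                (((rep e im * n * (rep e im)⁻¹) • c.2) im : Y)) = _
            rw [ind_smul_apply, ind_smul_apply, hj, hsel]
          · rintro ⟨_, ⟨n, hn, rfl⟩, rfl⟩
            have hj : jdx e n im = im := jdx_mem e hn im
            refine ⟨sel e n im, ?_⟩
            show ((sel e n im • c.1 im : Y), (sel e n im • c.2 im : Y))
              = (((n • c.1) im : Y), ((n • c.2) im : Y))
            rw [ind_smul_apply, ind_smul_apply, hj]
        obtain ⟨z, hz⟩ := hYprox (c.1 im) (c.2 im)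
        have hcomp : IsCompact (closure (orb (N : Set G) ((c.1, c.2) : Ind e Y × Ind e Y))) :=
          isClosed_closure.isCompact
        have hφc : Continuous fun p : Ind e Y × Ind e Y => ((p.1 im, p.2 im) : Y × Y) :=
          ((continuous_apply im).comp continuous_fst).prodMk
            ((continuous_apply im).comp continuous_snd)
        have hsub2 : closure (Set.range fun n : ↥N => ((n • c.1 im, n • c.2 im) : Y × Y)) ⊆
            (fun p : Ind e Y × Ind e Y => ((p.1 im, p.2 im) : Y × Y)) ''
              closure (orb (N : Set G) ((c.1, c.2) : Ind e Y × Ind e Y)) :=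
          closure_minimal (by rw [himg]; exact image_mono subset_closure)
            ((hcomp.image hφc).isClosed)
        obtain ⟨d, hd, hφd⟩ := hsub2 hz
        have hcd : closure (orb (N : Set G) ((c.1, c.2) : Ind e Y × Ind e Y))
            ⊆ closure (orb (N : Set G) ((a, b) : Ind e Y × Ind e Y)) := by
          rw [show ((c.1, c.2) : Ind e Y × Ind e Y) = c from rfl]
          exact closure_orb_min
            (inve_closure_orb (fun g hg h hh => N.mul_mem hg hh) _) isClosed_closure hc
        refine ⟨d, hcd hd, ?_⟩
        intro i hi
        rcases Nat.lt_succ_iff_lt_or_eq.mp hi with hlt | heq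
        · have hDi : closure (orb (N : Set G) ((c.1, c.2) : Ind e Y × Ind e Y))
              ⊆ {p : Ind e Y × Ind e Y | p.1 i = p.2 i} := by
            apply closure_minimal ?_ (isClosed_eq ((continuous_apply i).comp continuous_fst)
              ((continuous_apply i).comp continuous_snd))
            rintro _ ⟨n, hn, rfl⟩
            have hj : jdx e n i = i := jdx_mem e hn i
            show ((n • c.1) i : Y) = ((n • c.2) i : Y)
            rw [ind_smul_apply, ind_smul_apply, hj, hcoord i hlt]
          exact hDi hd
        · have hieq : i = im := Fin.ext heq
          have h1 : d.1 im = z := congrArg Prod.fst hφd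
          have h2 : d.2 im = z := congrArg Prod.snd hφd
          rw [hieq, h1, h2]
      · exact ⟨c, hc, fun i hi => hcoord i (by omega)⟩
  obtain ⟨⟨c1, c2⟩, hc, hcoord⟩ := key k f1 f2
  have hceq : c1 = c2 := funext fun i => hcoord i i.2
  subst hceq
  refine ⟨c1, ?_⟩
  have hsub : orb (N : Set G) ((f1, f2) : Ind e Y × Ind e Y)
      ⊆ Set.range fun g : G => ((g • f1, g • f2) : Ind e Y × Ind e Y) := by
    rintro _ ⟨g, hg, rfl⟩
    exact ⟨g, rfl⟩
  exact closure_mono hsub hc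

end Induced

open SAAux Set

theorem stronglyAmenable_iff_finiteIndex_closed_subgroup
    (G : Type u) [Group G] [TopologicalSpace G] [IsTopologicalGroup G]
    (S : Subgroup G) (hS : IsClosed (S : Set G)) [S.FiniteIndex] :
    IsStronglyAmenable.{u, v} G ↔ IsStronglyAmenable.{u, v} S := by
  constructor
  · -- G strongly amenable → S strongly amenable
    intro hG
    intro Y _ _ _ _ _ hYmin hYprox
    rcases isEmpty_or_nonempty Y with hY | hY
    · exact ⟨fun a b => (IsEmpty.false a).elim⟩
    classical
    set N : Subgroup G := S.normalCore with hNdef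
    haveI : N.FiniteIndex := Subgroup.finiteIndex_normalCore S
    haveI hNn : N.Normal := Subgroup.normalCore_normal S
    have hNS : N ≤ S := Subgroup.normalCore_le S
    have hNcl : IsClosed (N : Set G) := Subgroup.normalCore_isClosed S hS
    have hNopen : IsOpen (N : Set G) := Subgroup.isOpen_of_isClosed_of_finiteIndex N hNcl
    obtain ⟨hminN', hproxN'⟩ := restrict_minimal_proximal (N.subgroupOf S) hYmin hYprox
    -- transport the action of `N.subgroupOf S` to an action of `↥N`
    letI actN : MulAction ↥N Y := MulAction.compHom Y (Subgroup.inclusion hNS)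
    haveI : ContinuousSMul ↥N Y := by
      constructor
      have hincl : Continuous (Subgroup.inclusion hNS : ↥N → ↥S) :=
        Continuous.subtype_mk continuous_subtype_val _
      exact (hincl.comp continuous_fst).smul continuous_snd
    have hsmulN : ∀ (n : ↥N) (y : Y), n • y = (Subgroup.inclusion hNS n) • y :=
      fun n y => rfl
    have hminN : IsMinimalFlow ↥N Y := by
      intro y
      have hr : (Set.range fun n : ↥N => n • y)
          = Set.range fun m : ↥(N.subgroupOf S) => m • y := by
        ext z
        constructor
        · rintro ⟨n, rfl⟩
          refine ⟨⟨⟨(n : G), hNS n.2⟩, Subgroup.mem_subgroupOf.mpr n.2⟩, ?_⟩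
          rfl
        · rintro ⟨m, rfl⟩
          exact ⟨⟨((m : ↥S) : G), Subgroup.mem_subgroupOf.mp m.2⟩, rfl⟩
      rw [hr]
      exact hminN' y
    have hproxN : IsProximalFlow ↥N Y := by
      intro x y
      obtain ⟨z, hz⟩ := hproxN' x y
      refine ⟨z, ?_⟩
      have hr : (Set.range fun m : ↥(N.subgroupOf S) => ((m • x, m • y) : Y × Y))
          = Set.range fun n : ↥N => ((n • x, n • y) : Y × Y) := by
        ext p
        constructor
        · rintro ⟨m, rfl⟩
          exact ⟨⟨((m : ↥S) : G), Subgroup.mem_subgroupOf.mp m.2⟩, rfl⟩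
        · rintro ⟨n, rfl⟩
          refine ⟨⟨⟨(n : G), hNS n.2⟩, Subgroup.mem_subgroupOf.mpr n.2⟩, ?_⟩
          rfl
      rw [← hr]
      exact hz
    -- the induced flow
    obtain ⟨k, ⟨e⟩⟩ := Finite.exists_equiv_fin (G ⧸ N)
    haveI : ContinuousSMul G (Ind e Y) := ind_continuousSMul e Y hNopen
    have hXprox : IsProximalFlow G (Ind e Y) := ind_proximal e Y hproxN
    obtain ⟨M, hMne, hMcl, hMinv, hMmin⟩ :=
      exists_minimal_invariant (X := Ind e Y) (univ : Set G)
    -- instances on the minimal subflow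
    letI actM : MulAction G ↥M :=
      { smul := fun g m => ⟨g • (m : Ind e Y), hMinv g (mem_univ g) _ m.2⟩
        one_smul := fun m => Subtype.ext (one_smul G (m : Ind e Y))
        mul_smul := fun g h m => Subtype.ext (mul_smul g h (m : Ind e Y)) }
    haveI : CompactSpace ↥M := isCompact_iff_compactSpace.mp hMcl.isCompact
    haveI : ContinuousSMul G ↥M := by
      constructor
      apply Continuous.subtype_mk
      exact continuous_smul.comp ((continuous_id.prodMap continuous_subtype_val))
    have hMval : ∀ (g : G) (m : ↥M), ((g • m : ↥M) : Ind e Y) = g • (m : Ind e Y) :=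
      fun _ _ => rfl
    have horbval : ∀ m : ↥M,
        (Subtype.val '' (Set.range fun g : G => g • m))
          = Set.range fun g : G => g • (m : Ind e Y) := by
      intro m
      rw [← range_comp]
      rfl
    have hMflowmin : IsMinimalFlow G ↥M := by
      intro m
      have hval : closure (Set.range fun g : G => g • (m : Ind e Y)) = M := by
        apply hMmin
        · apply closure_minimal ?_ hMcl
          rintro _ ⟨g, rfl⟩
          exact hMinv g (mem_univ _) _ m.2
        · exact ⟨_, subset_closure ⟨1, one_smul _ _⟩⟩
        · exact isClosed_closure
        · intro g hg x hx
          have h1 : (fun z : Ind e Y => g • z) '' closure (Set.range fun g : G => g • (m : Ind e Y))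
              ⊆ closure ((fun z : Ind e Y => g • z) '' Set.range fun g : G => g • (m : Ind e Y)) :=
            image_closure_subset_closure_image (continuous_const_smul g)
          have h2 : (fun z : Ind e Y => g • z) '' (Set.range fun g : G => g • (m : Ind e Y))
              ⊆ Set.range fun g : G => g • (m : Ind e Y) := by
            rintro _ ⟨_, ⟨h, rfl⟩, rfl⟩
            exact ⟨g * h, by simp [mul_smul]⟩
          exact closure_mono h2 (h1 ⟨x, hx, rfl⟩)
      intro m'
      rw [closure_subtype, horbval, hval]
      exact m'.2
    have hMflowprox : IsProximalFlow G ↥M := by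
      intro m1 m2
      obtain ⟨z, hz⟩ := hXprox (m1 : Ind e Y) (m2 : Ind e Y)
      have hsubMM : (Set.range fun g : G => ((g • (m1 : Ind e Y), g • (m2 : Ind e Y))))
          ⊆ M ×ˢ M := by
        rintro _ ⟨g, rfl⟩
        exact ⟨hMinv g (mem_univ _) _ m1.2, hMinv g (mem_univ _) _ m2.2⟩
      have hzM : z ∈ M := by
        have := closure_minimal hsubMM (hMcl.prod hMcl) hz
        exact this.1
      refine ⟨⟨z, hzM⟩, ?_⟩
      have hind : Topology.IsInducing
          (Prod.map (Subtype.val : ↥M → Ind e Y) (Subtype.val : ↥M → Ind e Y)) :=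
        Topology.IsInducing.subtypeVal.prodMap Topology.IsInducing.subtypeVal
      rw [hind.closure_eq_preimage_closure_image]
      show (z, z) ∈ closure
        (Prod.map Subtype.val Subtype.val '' Set.range fun g : G => ((g • m1, g • m2)))
      have heq : (Prod.map (Subtype.val : ↥M → Ind e Y) Subtype.val ''
          Set.range fun g : G => ((g • m1, g • m2)))
          = Set.range fun g : G => ((g • (m1 : Ind e Y), g • (m2 : Ind e Y))) := by
        rw [← range_comp]
        rfl
      rw [heq]
      exact hz
    haveI hMsub : Subsingleton ↥M := hG ↥M hMflowmin hMflowprox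
    obtain ⟨f0, hf0⟩ := hMne
    have hfix : ∀ g : G, g • f0 = f0 := by
      intro g
      have h1 : (⟨g • f0, hMinv g (mem_univ g) f0 hf0⟩ : ↥M) = ⟨f0, hf0⟩ :=
        Subsingleton.elim _ _
      exact congrArg Subtype.val h1
    set i₀ : Fin k := e (((1 : G) : G ⧸ N)) with hi₀
    have hfixY : ∀ mN : ↥N, mN • ((f0 : Ind e Y) i₀) = (f0 : Ind e Y) i₀ := by
      intro mN
      have hnN : rep e i₀ * (mN : G) * (rep e i₀)⁻¹ ∈ N := hNn.conj_mem _ mN.2 _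
      have hj : jdx e (rep e i₀ * (mN : G) * (rep e i₀)⁻¹) i₀ = i₀ := jdx_mem e hnN i₀
      have hsel : sel e (rep e i₀ * (mN : G) * (rep e i₀)⁻¹) i₀ = mN :=
        Subtype.ext (by rw [sel_coe, hj]; group)
      have hcf := congrFun (hfix (rep e i₀ * (mN : G) * (rep e i₀)⁻¹)) i₀
      rwa [ind_smul_apply, hj, hsel] at hcf
    have hsingle : (Set.range fun mN : ↥N => mN • ((f0 : Ind e Y) i₀))
        = {(f0 : Ind e Y) i₀} := by
      ext y
      constructor
      · rintro ⟨mN, rfl⟩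
        exact hfixY mN
      · rintro rfl
        exact ⟨1, one_smul _ _⟩
    have hdense := hminN ((f0 : Ind e Y) i₀)
    rw [hsingle] at hdense
    have hall : ∀ y : Y, y = (f0 : Ind e Y) i₀ := by
      intro y
      have := hdense y
      rwa [closure_singleton, mem_singleton_iff] at this
    exact ⟨fun a b => (hall a).trans (hall b).symm⟩
  · -- S strongly amenable → G strongly amenable
    intro hSsa
    intro X _ _ _ _ _ hXmin hXprox
    obtain ⟨hm, hp⟩ := restrict_minimal_proximal S hXmin hXprox
    exact hSsa X hm hp
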